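/- arXiv:1605.04448 — 4 statements merged into one kernel-verified Lean document; each statement's English description precedes it below -/
import Mathlib

section
/- Let A be a k-algebra, φ a central form on A, P a finitely generated projective A-module and W a finite-dimensional k-vector space. Then for every f ∈ End_A(P ⊗_k W), the Hattori–Stallings trace t^φ_{P⊗W}(f) equals t^φ_P applied to the partial trace of f over W. -/
open TensorProduct

variable {k A : Type} [Field k] [Ring A] [Algebra k A]

/-- The Hattori–Stallings trace of `f : P → P` with respect to a central form `φ` and a
chosen presentation of `P` as a direct summand of the free module `A ⊗ X = Fin n → A`
(via `π : Aⁿ → P` split by `ι`). -/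
noncomputable def HSTrace (φ : A →ₗ[k] k) {P : Type} [AddCommGroup P] [Module A P]
    {n : ℕ} (π : (Fin n → A) →ₗ[A] P) (ι : P →ₗ[A] (Fin n → A))
    (f : P →ₗ[A] P) : k :=
  ∑ i : Fin n, φ (ι (f (π (Pi.single i 1))) i)

/-- The partial trace over `W` of an `A`-linear endomorphism `f` of `P ⊗_k W`,
computed with respect to a finite basis `b` of `W`:
`p ↦ Σ_i (id_P ⊗ b.coord i)(f (p ⊗ b i))`; this is
`(id_P ⊗ ev_W) ∘ (f ⊗ id_{W*}) ∘ (id_P ⊗ coev_W)`. -/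
noncomputable def partialTrace {P W : Type}
    [AddCommGroup P] [Module k P] [Module A P] [IsScalarTower k A P] [SMulCommClass k A P]
    [AddCommGroup W] [Module k W] {m : ℕ} (b : Module.Basis (Fin m) k W)
    (f : (P ⊗[k] W) →ₗ[A] (P ⊗[k] W)) : P →ₗ[A] P :=
  ∑ i : Fin m,
    (TensorProduct.AlgebraTensorModule.rid k A P).toLinearMap ∘ₗ
      TensorProduct.AlgebraTensorModule.map (LinearMap.id (R := A) (M := P)) (b.coord i) ∘ₗ
        f ∘ₗ
          TensorProduct.AlgebraTensorModule.map (LinearMap.id (R := A) (M := P))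
            (LinearMap.toSpanSingleton k W (b i)) ∘ₗ
            (TensorProduct.AlgebraTensorModule.rid k A P).symm.toLinearMap

noncomputable def trF (φ : A →ₗ[k] k) {n : ℕ} (g : (Fin n → A) →ₗ[A] (Fin n → A)) : k :=
  ∑ i, φ (g (Pi.single i 1) i)

lemma expandF {p q : ℕ} (g : (Fin p → A) →ₗ[A] (Fin q → A)) (x : Fin p → A) (i : Fin q) :
    g x i = ∑ l, x l * g (Pi.single l 1) i := by
  conv_lhs => rw [← Finset.univ_sum_single x]
  rw [map_sum, Finset.sum_apply]
  refine Finset.sum_congr rfl fun l _ => ?_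
  have hs : (Pi.single l (x l) : Fin p → A) = x l • (Pi.single l 1 : Fin p → A) := by
    funext j; by_cases hjl : j = l <;> simp [Pi.single_apply, hjl]
  rw [hs, map_smul]; rfl

lemma trF_cyc (φ : A →ₗ[k] k) (hφ : ∀ a b : A, φ (a * b) = φ (b * a)) {n N : ℕ}
    (g : (Fin N → A) →ₗ[A] (Fin n → A)) (h : (Fin n → A) →ₗ[A] (Fin N → A)) :
    trF φ (g ∘ₗ h) = trF φ (h ∘ₗ g) := by
  unfold trF
  simp only [LinearMap.comp_apply]
  calc ∑ i, φ (g (h (Pi.single i 1)) i)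
      = ∑ i, ∑ l, φ (h (Pi.single i 1) l * g (Pi.single l 1) i) := by
        refine Finset.sum_congr rfl fun i _ => ?_
        rw [expandF g (h (Pi.single i 1)) i, map_sum]
    _ = ∑ l, ∑ i, φ (g (Pi.single l 1) i * h (Pi.single i 1) l) := by
        rw [Finset.sum_comm]
        exact Finset.sum_congr rfl fun l _ => Finset.sum_congr rfl fun i _ => hφ _ _
    _ = ∑ l, φ (h (g (Pi.single l 1)) l) := by
        refine Finset.sum_congr rfl fun l _ => ?_
        rw [expandF h (g (Pi.single l 1)) l, map_sum]

section aux
variable {P W : Type}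
    [AddCommGroup P] [Module k P] [Module A P] [IsScalarTower k A P] [SMulCommClass k A P]
    [AddCommGroup W] [Module k W] {m : ℕ}

noncomputable def uMap (b : Module.Basis (Fin m) k W) (i : Fin m) : P →ₗ[A] P ⊗[k] W :=
  TensorProduct.AlgebraTensorModule.map (LinearMap.id (R := A) (M := P))
    (LinearMap.toSpanSingleton k W (b i)) ∘ₗ
    (TensorProduct.AlgebraTensorModule.rid k A P).symm.toLinearMap

noncomputable def vMap (b : Module.Basis (Fin m) k W) (i : Fin m) : (P ⊗[k] W) →ₗ[A] P :=
  (TensorProduct.AlgebraTensorModule.rid k A P).toLinearMap ∘ₗ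
    TensorProduct.AlgebraTensorModule.map (LinearMap.id (R := A) (M := P)) (b.coord i)

lemma sum_uv (b : Module.Basis (Fin m) k W) (x : P ⊗[k] W) :
    ∑ i : Fin m, uMap (A := A) b i (vMap (A := A) b i x) = x := by
  induction x using TensorProduct.induction_on with
  | zero => simp
  | tmul p w =>
      have : ∀ i, uMap (A := A) b i (vMap (A := A) b i (p ⊗ₜ[k] w)) = p ⊗ₜ[k] (b.repr w i • b i) := by
        intro i
        simp [uMap, vMap, TensorProduct.AlgebraTensorModule.rid_tmul,
          TensorProduct.AlgebraTensorModule.rid_symm_apply, TensorProduct.smul_tmul]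
      rw [Finset.sum_congr rfl fun i _ => this i, ← TensorProduct.tmul_sum]
      congr 1
      simpa using b.sum_repr w
  | add x y hx hy => simp [Finset.sum_add_distrib, hx, hy]

end aux

lemma partialTrace_eq {P W : Type}
    [AddCommGroup P] [Module k P] [Module A P] [IsScalarTower k A P] [SMulCommClass k A P]
    [AddCommGroup W] [Module k W] {m : ℕ} (b : Module.Basis (Fin m) k W)
    (f : (P ⊗[k] W) →ₗ[A] (P ⊗[k] W)) :
    partialTrace b f = ∑ i : Fin m, vMap (A := A) b i ∘ₗ f ∘ₗ uMap (A := A) b i := rfl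

/-- for a central form `φ`, a finitely generated projective `A`-module `P`
and a finite-dimensional `k`-vector space `W`, the Hattori–Stallings trace of
`f ∈ End_A(P ⊗_k W)` equals the Hattori–Stallings trace of the partial trace of `f`
over `W`. -/
theorem HSTrace_tensor_eq_HSTrace_partialTrace
    (φ : A →ₗ[k] k) (hφ : ∀ a b : A, φ (a * b) = φ (b * a))
    {P W : Type}
    [AddCommGroup P] [Module k P] [Module A P] [IsScalarTower k A P] [SMulCommClass k A P]
    [AddCommGroup W] [Module k W] [FiniteDimensional k W]
    {m : ℕ} (b : Module.Basis (Fin m) k W)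
    {n N : ℕ}
    (πP : (Fin n → A) →ₗ[A] P) (ιP : P →ₗ[A] (Fin n → A)) (hP : πP ∘ₗ ιP = LinearMap.id)
    (πT : (Fin N → A) →ₗ[A] (P ⊗[k] W)) (ιT : (P ⊗[k] W) →ₗ[A] (Fin N → A))
    (hT : πT ∘ₗ ιT = LinearMap.id)
    (f : (P ⊗[k] W) →ₗ[A] (P ⊗[k] W)) :
    HSTrace φ πT ιT f = HSTrace φ πP ιP (partialTrace b f) := by
  have hT' : ∀ x, πT (ιT x) = x := fun x => DFunLike.congr_fun hT x
  have hP' : ∀ x, πP (ιP x) = x := fun x => DFunLike.congr_fun hP x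
  have step1 : HSTrace φ πT ιT f
      = ∑ i : Fin m, trF φ ((ιT ∘ₗ f ∘ₗ uMap (A := A) b i ∘ₗ πP) ∘ₗ
          (ιP ∘ₗ vMap (A := A) b i ∘ₗ πT)) := by
    unfold HSTrace trF
    conv_rhs => rw [Finset.sum_comm]
    refine Finset.sum_congr rfl fun e _ => ?_
    simp only [LinearMap.comp_apply, hP']
    conv_lhs => rw [← sum_uv (A := A) b (πT (Pi.single e 1))]
    simp only [map_sum, Finset.sum_apply]
  have step3 : HSTrace φ πP ιP (partialTrace b f)
      = ∑ i : Fin m, trF φ ((ιP ∘ₗ vMap (A := A) b i ∘ₗ πT) ∘ₗ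
          (ιT ∘ₗ f ∘ₗ uMap (A := A) b i ∘ₗ πP)) := by
    unfold HSTrace trF
    rw [partialTrace_eq]
    conv_rhs => rw [Finset.sum_comm]
    refine Finset.sum_congr rfl fun e _ => ?_
    simp only [LinearMap.sum_apply, LinearMap.comp_apply, hT', map_sum, Finset.sum_apply]
  rw [step1, step3]
  exact Finset.sum_congr rfl fun i _ => trF_cyc φ hφ _ _
end

section
/- Let Λ(h) be the exterior algebra of a 2N-dimensional symplectic vector space h over ℂ, regarded as a superalgebra, and let E₀ = Λ(h) ⋊ ℂℤ₂ be the smash product where the generator κ of ℤ₂ acts by the parity involution. Then the center of E₀ equals Λ(h)_even ⊕ ℂ·(α¹⋯α^{2N} κ), where Λ(h)_even is the even part of Λ(h) and α¹,…,α^{2N} is a basis of h. -/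
open Function

/-- The symplectic vector space `h = ℂ^{2N}` with basis `α¹,…,α^{2N}`. -/
abbrev hsp (N : ℕ) := Fin (2 * N) → ℂ

/-- The exterior algebra `Λ(h)`. -/
abbrev Lam (N : ℕ) := ExteriorAlgebra ℂ (hsp N)

/-- The parity involution `ω` of `Λ(h)` (the algebra map induced by `v ↦ −v`). -/
noncomputable def parity (N : ℕ) : Lam N →ₐ[ℂ] Lam N :=
  ExteriorAlgebra.lift ℂ ⟨-(ExteriorAlgebra.ι ℂ), by intro m; simp⟩

/-- The top exterior product `α¹ ⋯ α^{2N} ∈ Λ(h)`. -/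
noncomputable def topEl (N : ℕ) : Lam N :=
  ((List.finRange (2 * N)).map
    (fun i => ExteriorAlgebra.ι ℂ (Pi.single i 1 : hsp N))).prod

namespace CenterAux

variable {N : ℕ}

noncomputable abbrev ee (N : ℕ) (i : Fin (2 * N)) : hsp N := Pi.single i 1

noncomputable abbrev ι' (N : ℕ) : hsp N →ₗ[ℂ] Lam N := ExteriorAlgebra.ι ℂ

theorem parity_ι (v : hsp N) : parity N (ι' N v) = -(ι' N v) := by
  simp [parity, ExteriorAlgebra.lift_ι_apply]

theorem ι_mul_parity (v : hsp N) (a : Lam N) :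
    ι' N v * a = parity N a * ι' N v := by
  induction a using ExteriorAlgebra.induction with
  | algebraMap r => rw [AlgHom.commutes]; exact (Algebra.commutes r _).symm
  | ι w =>
      rw [parity_ι, neg_mul]
      exact eq_neg_of_add_eq_zero_left (ExteriorAlgebra.ι_add_mul_swap v w)
  | mul x y hx hy =>
      rw [← mul_assoc, hx, mul_assoc, hy, ← mul_assoc, map_mul]
  | add x y hx hy => rw [mul_add, hx, hy, map_add, add_mul]

theorem even_comm {a : Lam N} (ha : parity N a = a) (l : Lam N) :
    a * l = l * a := by
  induction l using ExteriorAlgebra.induction with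
  | algebraMap r => exact (Algebra.commutes r a).symm
  | ι w => rw [ι_mul_parity, ha]
  | mul x y hx hy => rw [← mul_assoc, hx, mul_assoc, hy, ← mul_assoc]
  | add x y hx hy => rw [mul_add, add_mul, hx, hy]

theorem topEl_eq_ofFn : topEl N = (List.ofFn fun i => ι' N (ee N i)).prod := by
  rw [topEl, List.ofFn_eq_map]

theorem ι_single_mul_topEl (i : Fin (2 * N)) : ι' N (ee N i) * topEl N = 0 := by
  rw [topEl_eq_ofFn]
  exact ExteriorAlgebra.ι_mul_prod_list (fun k => ee N k) i

theorem topEl_mul_ι_single (i : Fin (2 * N)) : topEl N * ι' N (ee N i) = 0 := by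
  have hsnoc : (ExteriorAlgebra.ιMulti ℂ (2 * N + 1))
      (Fin.snoc (fun k => ee N k) (ee N i)) = topEl N * ι' N (ee N i) := by
    rw [ExteriorAlgebra.ιMulti_apply, List.ofFn_succ', List.prod_concat, topEl_eq_ofFn]
    simp [Fin.snoc_castSucc]
  rw [← hsnoc]
  refine AlternatingMap.map_eq_zero_of_eq _ _ (i := i.castSucc) (j := Fin.last (2 * N)) ?_ ?_
  · simp [Fin.snoc_castSucc]
  · exact (Fin.castSucc_lt_last i).ne

theorem ι_decomp (v : hsp N) : ι' N v = ∑ i, v i • ι' N (ee N i) := by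
  have hv : v = ∑ i, v i • ee N i := by
    conv_lhs => rw [← Finset.univ_sum_single v]
    refine Finset.sum_congr rfl fun i _ => ?_
    rw [ee, ← Pi.single_smul, smul_eq_mul, mul_one]
  conv_lhs => rw [hv]
  rw [map_sum]
  simp

theorem ι_mul_topEl (v : hsp N) : ι' N v * topEl N = 0 := by
  rw [ι_decomp, Finset.sum_mul]
  refine Finset.sum_eq_zero fun i _ => ?_
  rw [smul_mul_assoc, ι_single_mul_topEl, smul_zero]

theorem topEl_mul_ι (v : hsp N) : topEl N * ι' N v = 0 := by
  rw [ι_decomp, Finset.mul_sum]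
  refine Finset.sum_eq_zero fun i _ => ?_
  rw [mul_smul_comm, topEl_mul_ι_single, smul_zero]

theorem neg_map_prod (l : List (Lam N)) :
    (l.map fun x => -x).prod = (-1 : Lam N) ^ l.length * l.prod := by
  induction l with
  | nil => simp
  | cons a l ih =>
      rw [List.map_cons, List.prod_cons, List.prod_cons, ih, List.length_cons, pow_succ,
        mul_neg_one, neg_mul, neg_mul, ← mul_assoc,
        ← ((Commute.neg_one_left a).pow_left l.length).eq, mul_assoc]

theorem parity_topEl : parity N (topEl N) = topEl N := by
  conv_lhs => rw [topEl_eq_ofFn, List.ofFn_eq_map]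
  rw [map_list_prod, List.map_map]
  have h1 : ((List.finRange (2 * N)).map ((parity N) ∘ fun i => ι' N (ee N i)))
      = ((List.finRange (2 * N)).map fun i => ι' N (ee N i)).map fun x => -x := by
    rw [List.map_map]
    exact List.map_congr_left fun i _ => by simp [parity_ι]
  rw [h1, neg_map_prod, List.length_map, List.length_finRange,
    Even.neg_one_pow (even_two_mul N), one_mul, topEl_eq_ofFn, List.ofFn_eq_map]

theorem comm_topEl (l : Lam N) : l * topEl N = topEl N * parity N l := by
  induction l using ExteriorAlgebra.induction with
  | algebraMap r => rw [AlgHom.commutes]; exact Algebra.commutes r _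
  | ι w => rw [ι_mul_topEl, parity_ι, mul_neg, topEl_mul_ι, neg_zero]
  | mul x y hx hy => rw [mul_assoc, hy, ← mul_assoc, hx, mul_assoc, map_mul]
  | add x y hx hy => rw [add_mul, hx, hy, map_add, mul_add]

theorem mul_topEl_smul (x : Lam N) : ∃ c : ℂ, x * topEl N = c • topEl N := by
  induction x using ExteriorAlgebra.induction with
  | algebraMap r => exact ⟨r, by rw [Algebra.smul_def]⟩
  | ι w => exact ⟨0, by rw [ι_mul_topEl, zero_smul]⟩
  | mul x y hx hy =>
      obtain ⟨c, hc⟩ := hy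
      obtain ⟨c', hc'⟩ := hx
      exact ⟨c * c', by rw [mul_assoc, hc, mul_smul_comm, hc', smul_smul]⟩
  | add x y hx hy =>
      obtain ⟨c, hc⟩ := hx
      obtain ⟨c', hc'⟩ := hy
      exact ⟨c + c', by rw [add_mul, hc, hc', add_smul]⟩

/-- The coordinate functionals. -/
noncomputable abbrev dd (N : ℕ) (i : Fin (2 * N)) : Module.Dual ℂ (hsp N) :=
  LinearMap.proj i

/-- partial products of the basis vectors -/
noncomputable def T (N : ℕ) (k : ℕ) : Lam N :=
  (((List.finRange (2 * N)).take k).map fun i => ι' N (ee N i)).prod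

theorem T_zero : T N 0 = 1 := by simp [T]

theorem T_top : T N (2 * N) = topEl N := by
  rw [T, List.take_of_length_le (by simp), ← List.ofFn_eq_map, ← topEl_eq_ofFn]

theorem T_succ (k : ℕ) (hk : k < 2 * N) :
    T N (k + 1) = T N k * ι' N (ee N ⟨k, hk⟩) := by
  rw [T, T, List.take_succ, List.map_append, List.prod_append]
  congr 1
  have h : (List.finRange (2 * N))[k]? = some ⟨k, hk⟩ := by
    rw [List.getElem?_eq_getElem (by simpa using hk)]
    simp
  rw [h]
  simp

theorem peel : ∀ k, k ≤ 2 * N → ∀ b : Lam N,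
    (∀ i : Fin (2 * N), (i : ℕ) < k → b * ι' N (ee N i) = 0) →
    ∃ b', b = b' * T N k := by
  intro k
  induction k with
  | zero => exact fun _ b _ => ⟨b, by rw [T_zero, mul_one]⟩
  | succ k ih =>
      intro hk b hb
      have hk' : k < 2 * N := hk
      set i₀ : Fin (2 * N) := ⟨k, hk'⟩ with hi₀
      set b₁ : Lam N := CliffordAlgebra.contractRight b (dd N i₀) with hb₁
      have key : ∀ i : Fin (2 * N),
          CliffordAlgebra.contractRight (b * ι' N (ee N i)) (dd N i₀)
            = dd N i₀ (ee N i) • b - b₁ * ι' N (ee N i) :=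
        fun i => CliffordAlgebra.contractRight_mul_ι _ _ _
      have hb₁mul : ∀ i : Fin (2 * N), (i : ℕ) < k → b₁ * ι' N (ee N i) = 0 := by
        intro i hi
        have h0 := key i
        rw [hb i (Nat.lt_succ_of_lt hi), map_zero, LinearMap.zero_apply] at h0
        have hd : dd N i₀ (ee N i) = 0 := by
          have hne : i₀ ≠ i := by
            intro h
            rw [← h] at hi
            exact absurd hi (lt_irrefl k)
          simp only [dd, ee, LinearMap.proj_apply]
          exact Pi.single_eq_of_ne hne 1
        rw [hd, zero_smul, zero_sub] at h0
        exact neg_eq_zero.mp h0.symm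
      have hpeel : b = b₁ * ι' N (ee N i₀) := by
        have h1 := key i₀
        rw [hb i₀ (Nat.lt_succ_self k), map_zero, LinearMap.zero_apply] at h1
        have hd : dd N i₀ (ee N i₀) = 1 := by
          simp only [dd, ee, LinearMap.proj_apply]
          exact Pi.single_eq_same i₀ 1
        rw [hd, one_smul] at h1
        exact sub_eq_zero.mp h1.symm
      obtain ⟨b', hb'⟩ := ih (le_of_lt hk') b₁ hb₁mul
      exact ⟨b', by rw [hpeel, hb', T_succ k hk', mul_assoc]⟩

theorem annihilator_top {b : Lam N}
    (hb : ∀ v : hsp N, b * ι' N v = 0) :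
    ∃ c : ℂ, b = c • topEl N := by
  obtain ⟨b', hb'⟩ := peel (2 * N) le_rfl b (fun i _ => hb (ee N i))
  rw [T_top] at hb'
  obtain ⟨c, hc⟩ := mul_topEl_smul b'
  exact ⟨c, by rw [hb', hc]⟩

end CenterAux

open CenterAux in
set_option maxHeartbeats 2000000 in
/-- the center of the smash product `E₀ = Λ(h) ⋊ ℂℤ₂` (presented
abstractly: `E₀` is generated over `Λ(h)` by an element `κ` with `κ² = 1` and
`κ·ι(v) = −ι(v)·κ`, and is free of rank 2 over `Λ(h)` with basis `1, κ`) equals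
`Λ(h)_even ⊕ ℂ·(α¹⋯α^{2N} κ)`, where `Λ(h)_even` is the fixed subspace of the parity
involution. -/
theorem center_of_smash_product
    (N : ℕ) (hN : 0 < N)
    (E : Type) [Ring E] [Algebra ℂ E]
    (j : Lam N →ₐ[ℂ] E) (hj : Injective j)
    (κ : E) (hκ2 : κ * κ = 1)
    (hκι : ∀ v : hsp N, κ * j (ExteriorAlgebra.ι ℂ v) = -(j (ExteriorAlgebra.ι ℂ v) * κ))
    (hfree : ∀ x : E, ∃! p : Lam N × Lam N, x = j p.1 + j p.2 * κ) :
    ∀ x : E, x ∈ Subalgebra.center ℂ E ↔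
      ∃ (a : Lam N) (c : ℂ), parity N a = a ∧ x = j a + c • (j (topEl N) * κ) := by
  have hκj : ∀ l : Lam N, κ * j l = j (parity N l) * κ := by
    intro l
    induction l using ExteriorAlgebra.induction with
    | algebraMap r =>
        rw [AlgHom.commutes, AlgHom.commutes, AlgHom.commutes]
        exact (Algebra.commutes r κ).symm
    | ι w => rw [hκι w, parity_ι, map_neg, neg_mul]
    | mul x y hx hy =>
        rw [map_mul, ← mul_assoc, hx, mul_assoc, hy, ← mul_assoc, map_mul, map_mul]
    | add x y hx hy => rw [map_add, mul_add, hx, hy, map_add, map_add, add_mul]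
  have huniq : ∀ a b a' b' : Lam N,
      j a + j b * κ = j a' + j b' * κ → a = a' ∧ b = b' := by
    intro a b a' b' h
    have h1 := (hfree (j a + j b * κ)).unique (y₁ := (a, b)) (y₂ := (a', b')) rfl h
    exact ⟨congrArg Prod.fst h1, congrArg Prod.snd h1⟩
  have expand : ∀ u v z w : Lam N, (j u + j v * κ) * (j z + j w * κ)
      = j (u * z + v * parity N w) + j (u * w + v * parity N z) * κ := by
    intro u v z w
    have t1 : j u * (j w * κ) = j (u * w) * κ := by rw [← mul_assoc, ← map_mul]
    have t2 : (j v * κ) * j z = j (v * parity N z) * κ := by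
      rw [mul_assoc, hκj z, ← mul_assoc, ← map_mul]
    have t3 : (j v * κ) * (j w * κ) = j (v * parity N w) := by
      rw [mul_assoc, ← mul_assoc κ, hκj w, mul_assoc, hκ2, mul_one, ← map_mul]
    rw [add_mul, mul_add, mul_add, t1, t2, t3, ← map_mul, map_add, map_add, add_mul]
    abel
  intro x
  constructor
  · intro hx
    rw [Subalgebra.mem_center_iff] at hx
    obtain ⟨⟨a, b⟩, hab, -⟩ := hfree x
    simp only at hab
    have hκx : κ * x = x * κ := hx κ
    have hxκ1 : κ * x = j (parity N b) + j (parity N a) * κ := by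
      rw [hab, mul_add, ← mul_assoc, hκj a, hκj b, mul_assoc, hκ2, mul_one, add_comm]
    have hxκ2 : x * κ = j b + j a * κ := by
      rw [hab, add_mul, mul_assoc, hκ2, mul_one, add_comm]
    obtain ⟨hpb, hpa⟩ := huniq _ _ _ _ (hxκ1.symm.trans (hκx.trans hxκ2))
    have hbv : ∀ v : hsp N, b * ι' N v = 0 := by
      intro v
      have hcomm : j (ι' N v) * x = x * j (ι' N v) := hx (j (ι' N v))
      have lhs : j (ι' N v) * x = j (ι' N v * a) + j (ι' N v * b) * κ := by
        rw [hab, mul_add, ← map_mul, ← mul_assoc, ← map_mul]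
      have rhs : x * j (ι' N v) = j (a * ι' N v) + j (-(b * ι' N v)) * κ := by
        rw [hab, add_mul, ← map_mul, mul_assoc, hκι v, mul_neg, ← mul_assoc,
          ← map_mul, map_neg, neg_mul]
      obtain ⟨-, h2⟩ := huniq _ _ _ _ ((lhs.symm.trans hcomm).trans rhs)
      have h3 : ι' N v * b = b * ι' N v := by
        rw [ι_mul_parity, hpb]
      have h5 : (2 : ℂ) • (b * ι' N v) = 0 := by
        rw [two_smul]
        nth_rewrite 1 [← h3]
        rw [h2, neg_add_cancel]
      rcases smul_eq_zero.mp h5 with h | h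
      · exact absurd h two_ne_zero
      · exact h
    obtain ⟨c, hc⟩ := annihilator_top hbv
    refine ⟨a, c, hpa, ?_⟩
    rw [hab, hc, map_smul, smul_mul_assoc]
  · rintro ⟨a, c, hpa, rfl⟩
    rw [Subalgebra.mem_center_iff]
    intro y
    obtain ⟨⟨p, q⟩, hy, -⟩ := hfree y
    simp only at hy
    subst hy
    have hxform : j a + c • (j (topEl N) * κ) = j a + j (c • topEl N) * κ := by
      rw [map_smul, smul_mul_assoc]
    have e1 : p * a + q * parity N (c • topEl N)
        = a * p + (c • topEl N) * parity N q := by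
      rw [map_smul, parity_topEl, mul_smul_comm, comm_topEl q, even_comm hpa p,
        smul_mul_assoc]
    have e2 : p * (c • topEl N) + q * parity N a
        = a * q + (c • topEl N) * parity N p := by
      rw [hpa, mul_smul_comm, smul_mul_assoc, comm_topEl p, even_comm hpa q, add_comm]
    rw [hxform, expand p q a (c • topEl N), expand a (c • topEl N) p q, e1, e2]
end

section
/- Let E₀ = Λ(h) ⋊ ℂℤ₂ for h a 2N-dimensional vector space with basis α¹,…,α^{2N}, κ the ℤ₂-generator acting by parity involution. Define ε : E₀ → ℂ to be nonzero only on the top-degree component multiplied by κ, normalized by ε(α¹⋯α^{2N} κ) = 1. Then ε is a central form on E₀ (ε(ab) = ε(ba) for all a, b) and the induced pairing (a,b) ↦ ε(ab) is non-degenerate, so E₀ is a symmetric Frobenius algebra. -/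
open Function

noncomputable section SmashAux

namespace SmashAux

open ExteriorAlgebra

variable {N : ℕ}

/-- Product of a list of vectors in the exterior algebra. -/
def F (N : ℕ) (l : List (hsp N)) : Lam N :=
  (l.map (fun v => ι ℂ v)).prod

@[simp] lemma F_nil : F N [] = 1 := rfl

@[simp] lemma F_cons (v : hsp N) (l : List (hsp N)) :
    F N (v :: l) = ι ℂ v * F N l := by simp [F]

@[simp] lemma F_append (l₁ l₂ : List (hsp N)) :
    F N (l₁ ++ l₂) = F N l₁ * F N l₂ := by simp [F]

lemma ι_anticomm (v w : hsp N) : ι ℂ v * ι ℂ w = -(ι ℂ w * ι ℂ v) :=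
  eq_neg_of_add_eq_zero_left (ExteriorAlgebra.ι_add_mul_swap (R := ℂ) v w)

lemma ι_mul_F (v : hsp N) (l : List (hsp N)) :
    ι ℂ v * F N l = (-1 : ℂ) ^ l.length • (F N l * ι ℂ v) := by
  induction l with
  | nil => simp
  | cons w l ih =>
    rw [List.length_cons, F_cons, ← mul_assoc, ι_anticomm v w, neg_mul, mul_assoc, ih,
      mul_smul_comm, ← mul_assoc, ← neg_smul]
    congr 1
    rw [pow_succ]
    ring

lemma F_append_comm (l₁ l₂ : List (hsp N)) :
    F N (l₁ ++ l₂) = (-1 : ℂ) ^ (l₁.length * l₂.length) • F N (l₂ ++ l₁) := by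
  induction l₁ with
  | nil => simp
  | cons v l₁ ih =>
    have h1 : F N ((v :: l₁) ++ l₂) = ι ℂ v * F N (l₁ ++ l₂) := by
      simp [mul_assoc]
    rw [h1, ih, mul_smul_comm]
    have h2 : ι ℂ v * F N (l₂ ++ l₁) = (-1 : ℂ) ^ l₂.length • F N (l₂ ++ (v :: l₁)) := by
      rw [F_append, ← mul_assoc, ι_mul_F v l₂, smul_mul_assoc, mul_assoc, F_append, F_cons]
    rw [h2, smul_smul, ← pow_add]
    congr 2
    simp only [List.length_cons, List.length_append]
    ring

/-- Permuting a list changes the product by a sign. -/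
lemma F_perm {l l' : List (hsp N)} (h : l.Perm l') :
    ∃ c : ℂ, (c = 1 ∨ c = -1) ∧ F N l = c • F N l' := by
  induction h with
  | nil => exact ⟨1, Or.inl rfl, by simp⟩
  | cons x _ ih =>
    obtain ⟨c, hc, h⟩ := ih
    exact ⟨c, hc, by simp [F_cons, h, mul_smul_comm]⟩
  | swap x y l =>
    refine ⟨-1, Or.inr rfl, ?_⟩
    simp only [F_cons]
    rw [← mul_assoc, ι_anticomm y x, ← mul_assoc]
    simp
  | trans _ _ ih₁ ih₂ =>
    obtain ⟨c₁, hc₁, h₁⟩ := ih₁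
    obtain ⟨c₂, hc₂, h₂⟩ := ih₂
    refine ⟨c₁ * c₂, ?_, by rw [h₁, h₂, smul_smul]⟩
    rcases hc₁ with rfl | rfl <;> rcases hc₂ with rfl | rfl <;> simp

lemma F_dup {l : List (hsp N)} (h : ¬ l.Nodup) : F N l = 0 := by
  induction l with
  | nil => simp at h
  | cons v l ih =>
    rw [List.nodup_cons] at h
    push_neg at h
    by_cases hv : v ∈ l
    · obtain ⟨c, _, hP⟩ := F_perm (List.perm_cons_erase hv)
      rw [F_cons, hP, mul_smul_comm, F_cons, ← mul_assoc, ι_sq_zero, zero_mul, smul_zero]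
    · rw [F_cons, ih (h hv), mul_zero]

/-- The `i`-th basis vector. -/
def gen (N : ℕ) (i : Fin (2 * N)) : hsp N := Pi.single i 1

lemma gen_injective : Function.Injective (gen N) := by
  intro i i' h
  by_contra hne
  have := congrFun h i
  simp [gen, Pi.single_apply, hne] at this

/-- Product of basis vectors indexed by a list of indices. -/
def P (N : ℕ) (l : List (Fin (2 * N))) : Lam N := F N (l.map (gen N))

lemma P_append (l₁ l₂ : List (Fin (2 * N))) : P N (l₁ ++ l₂) = P N l₁ * P N l₂ := by
  show F N ((l₁ ++ l₂).map (gen N)) = _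
  rw [List.map_append, F_append]
  rfl

/-- The basis monomial attached to a finite set of indices. -/
def eS (N : ℕ) (s : Finset (Fin (2 * N))) : Lam N := P N (s.sort (· ≤ ·))

lemma topEl_eq : topEl N = P N (List.finRange (2 * N)) := by
  simp only [topEl, P, F, List.map_map]
  rfl

lemma P_dup {l : List (Fin (2 * N))} (h : ¬ l.Nodup) : P N l = 0 := by
  refine F_dup fun hn => h ?_
  exact (List.nodup_map_iff gen_injective).mp hn

lemma ι_gen_mul_eS (i : Fin (2 * N)) (s : Finset (Fin (2 * N))) :
    ι ℂ (gen N i) * eS N s ∈ Submodule.span ℂ (Set.range (eS N)) := by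
  have hform : ι ℂ (gen N i) * eS N s = P N (i :: s.sort (· ≤ ·)) := by
    show ι ℂ (gen N i) * F N ((s.sort (· ≤ ·)).map (gen N)) =
      F N ((i :: s.sort (· ≤ ·)).map (gen N))
    rw [List.map_cons, F_cons]
  rw [hform]
  by_cases hi : i ∈ s
  · rw [P_dup (by simp [List.nodup_cons, Finset.mem_sort, hi])]
    exact Submodule.zero_mem _
  · have hnd : (i :: s.sort (· ≤ ·)).Nodup := by
      simp [List.nodup_cons, Finset.mem_sort, hi, Finset.sort_nodup]
    have hperm : (i :: s.sort (· ≤ ·)).Perm ((insert i s).sort (· ≤ ·)) := by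
      refine List.perm_of_nodup_nodup_toFinset_eq hnd (Finset.sort_nodup _ _) ?_
      simp [Finset.sort_toFinset]
    obtain ⟨c, _, hP⟩ := F_perm (hperm.map (gen N))
    rw [P, hP]
    exact Submodule.smul_mem _ _ (Submodule.subset_span ⟨insert i s, rfl⟩)

lemma ι_decomp (v : hsp N) : ι ℂ v = ∑ i, v i • ι ℂ (gen N i) := by
  have : v = ∑ i, v i • gen N i := by
    conv_lhs => rw [← Finset.univ_sum_single v]
    refine Finset.sum_congr rfl fun i _ => ?_
    rw [gen, ← Pi.single_smul, smul_eq_mul, mul_one]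
  conv_lhs => rw [this]
  simp

lemma ι_mul_mem_span_eS (v : hsp N) (x : Lam N)
    (hx : x ∈ Submodule.span ℂ (Set.range (eS N))) :
    ι ℂ v * x ∈ Submodule.span ℂ (Set.range (eS N)) := by
  induction hx using Submodule.span_induction with
  | mem y hy =>
    obtain ⟨s, rfl⟩ := hy
    rw [ι_decomp v, Finset.sum_mul]
    exact Submodule.sum_mem _ fun i _ => by
      rw [smul_mul_assoc]
      exact Submodule.smul_mem _ _ (ι_gen_mul_eS i s)
  | zero => simp
  | add y z _ _ hy hz => rw [mul_add]; exact Submodule.add_mem _ hy hz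
  | smul a y _ hy => rw [mul_smul_comm]; exact Submodule.smul_mem _ _ hy

lemma F_mem_span_eS (l : List (hsp N)) :
    F N l ∈ Submodule.span ℂ (Set.range (eS N)) := by
  induction l with
  | nil =>
    have : (1 : Lam N) = eS N ∅ := by simp [eS, P]
    rw [F_nil, this]
    exact Submodule.subset_span ⟨∅, rfl⟩
  | cons v l ih => rw [F_cons]; exact ι_mul_mem_span_eS v _ ih

lemma mem_span_F (x : Lam N) : x ∈ Submodule.span ℂ (Set.range (F N)) := by
  induction x using ExteriorAlgebra.induction with
  | algebraMap r =>
    rw [Algebra.algebraMap_eq_smul_one]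
    have h1 : (1 : Lam N) = F N [] := rfl
    rw [h1]
    exact Submodule.smul_mem _ _ (Submodule.subset_span ⟨[], rfl⟩)
  | ι v =>
    have h1 : ι ℂ v = F N [v] := by simp
    rw [h1]
    exact Submodule.subset_span ⟨[v], rfl⟩
  | mul a b ha hb =>
    induction ha using Submodule.span_induction with
    | mem y hy =>
      obtain ⟨l₁, rfl⟩ := hy
      induction hb using Submodule.span_induction with
      | mem z hz =>
        obtain ⟨l₂, rfl⟩ := hz
        rw [← F_append]
        exact Submodule.subset_span ⟨l₁ ++ l₂, rfl⟩
      | zero => simp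
      | add z w _ _ hz hw => rw [mul_add]; exact Submodule.add_mem _ hz hw
      | smul a z _ hz => rw [mul_smul_comm]; exact Submodule.smul_mem _ _ hz
    | zero => simp
    | add y z _ _ hy hz => rw [add_mul]; exact Submodule.add_mem _ hy hz
    | smul a y _ hy => rw [smul_mul_assoc]; exact Submodule.smul_mem _ _ hy
  | add a b ha hb => exact Submodule.add_mem _ ha hb

lemma mem_span_eS (x : Lam N) : x ∈ Submodule.span ℂ (Set.range (eS N)) := by
  have h := mem_span_F x
  refine Submodule.span_le.mpr ?_ h
  rintro y ⟨l, rfl⟩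
  exact F_mem_span_eS l

/-- The grade involution on the exterior algebra. -/
def invol (N : ℕ) : Lam N →ₐ[ℂ] Lam N := CliffordAlgebra.involute

lemma invol_ι (v : hsp N) : invol N (ι ℂ v) = -ι ℂ v := CliffordAlgebra.involute_ι v

lemma invol_surjective : Function.Surjective (invol N) :=
  CliffordAlgebra.involute_involutive.surjective

lemma invol_F (l : List (hsp N)) :
    invol N (F N l) = (-1 : ℂ) ^ l.length • F N l := by
  induction l with
  | nil => simp [invol]
  | cons v l ih =>
    rw [F_cons, map_mul, ih, invol_ι, List.length_cons, pow_succ, neg_mul,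
      mul_smul_comm, ← neg_smul]
    congr 1
    ring

lemma even_helper {p q : ℕ} (h : Even (p + q)) : Even (p + p * q) := by
  have hrw : p + p * q = p * (1 + q) := by ring
  rw [hrw]
  rcases Nat.even_or_odd p with hp | hp
  · exact hp.mul_right _
  · have hq : Odd q := by
      rcases Nat.even_or_odd q with hq | hq
      · exact absurd h (by simp [Nat.even_add, hq, Nat.not_even_iff_odd.mpr hp])
      · exact hq
    obtain ⟨k, hk⟩ := hq
    exact Even.mul_left ⟨k + 1, by omega⟩ _

end SmashAux

end SmashAux

set_option maxHeartbeats 1000000 in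
open SmashAux in
/-- on the smash product `E₀ = Λ(h) ⋊ ℂℤ₂` (presented abstractly, with
`κ² = 1`, `κ·ι(v) = −ι(v)·κ` and `E₀` free of rank 2 over `Λ(h)` with basis `1, κ`),
the linear form `ε` vanishing on all of `Λ(h)` and given on `Λ(h)·κ` by the top-degree
coefficient `μ` (normalised by `ε(α¹⋯α^{2N}κ) = 1`) is a central form whose induced
pairing `(a,b) ↦ ε(ab)` is non-degenerate; hence `E₀` is a symmetric Frobenius
algebra. -/
theorem smash_product_symmetric_frobenius
    (N : ℕ) (hN : 0 < N)
    (E : Type) [Ring E] [Algebra ℂ E]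
    (j : Lam N →ₐ[ℂ] E) (hj : Injective j)
    (κ : E) (hκ2 : κ * κ = 1)
    (hκι : ∀ v : hsp N, κ * j (ExteriorAlgebra.ι ℂ v) = -(j (ExteriorAlgebra.ι ℂ v) * κ))
    (hfree : ∀ x : E, ∃! p : Lam N × Lam N, x = j p.1 + j p.2 * κ)
    -- `μ` is the top-degree coefficient on `Λ(h)`:
    (μ : Lam N →ₗ[ℂ] ℂ)
    (hμtop : μ (topEl N) = 1)
    (hμlow : ∀ l : List (hsp N), l.length ≠ 2 * N →
      μ ((l.map (fun v => ExteriorAlgebra.ι ℂ v)).prod) = 0)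
    -- `ε` vanishes on `Λ(h)` and restricts to `μ` on `Λ(h)·κ`:
    (ε : E →ₗ[ℂ] ℂ)
    (hε0 : ∀ a : Lam N, ε (j a) = 0)
    (hε1 : ∀ a : Lam N, ε (j a * κ) = μ a) :
    (∀ x y : E, ε (x * y) = ε (y * x)) ∧
    (∀ x : E, (∀ y : E, ε (x * y) = 0) → x = 0) := by
  classical
  have hμF : ∀ l : List (hsp N), l.length ≠ 2 * N → μ (F N l) = 0 := fun l hl => hμlow l hl
  -- κ commutation with all of Λ(h)
  have hcomm : ∀ a : Lam N, κ * j a = j (invol N a) * κ := by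
    intro a
    induction a using ExteriorAlgebra.induction with
    | algebraMap r =>
      rw [AlgHom.commutes, AlgHom.commutes, AlgHom.commutes, Algebra.commutes]
    | ι v => rw [hκι v, invol_ι, map_neg, neg_mul]
    | mul a b ha hb =>
      rw [map_mul, map_mul, ← mul_assoc, ha, mul_assoc, hb, map_mul, ← mul_assoc]
    | add a b ha hb =>
      rw [map_add, map_add, map_add, mul_add, add_mul, ha, hb]
  -- evaluation of ε on normal forms
  have εval : ∀ p q : Lam N, ε (j p + j q * κ) = μ q := by
    intro p q
    rw [map_add, hε0, hε1, zero_add]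
  -- product of two normal forms
  have hmulform : ∀ a b c d : Lam N,
      (j a + j b * κ) * (j c + j d * κ) =
        j (a * c + b * invol N d) + j (a * d + b * invol N c) * κ := by
    intro a b c d
    have t3 : j b * κ * j c = j (b * invol N c) * κ := by
      rw [mul_assoc, hcomm, ← mul_assoc, ← map_mul]
    have t4 : j b * κ * (j d * κ) = j (b * invol N d) := by
      rw [mul_assoc, ← mul_assoc κ, hcomm, mul_assoc _ κ κ, hκ2, mul_one, ← map_mul]
    have t2 : j a * (j d * κ) = j (a * d) * κ := by
      rw [← mul_assoc, ← map_mul]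
    rw [mul_add, add_mul, add_mul, t3, t4, t2, ← map_mul, map_add, map_add, add_mul]
    abel
  -- the key symmetry lemma: μ (a * b) = μ (b * invol a)
  have hK : ∀ a b : Lam N, μ (a * b) = μ (b * invol N a) := by
    have hmon : ∀ l₁ l₂ : List (hsp N),
        μ (F N l₁ * F N l₂) = μ (F N l₂ * invol N (F N l₁)) := by
      intro l₁ l₂
      rw [invol_F, mul_smul_comm, map_smul, ← F_append,
        show F N l₂ * F N l₁ = F N (l₂ ++ l₁) from (F_append l₂ l₁).symm,
        F_append_comm l₂ l₁, map_smul]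
      by_cases hlen : l₁.length + l₂.length = 2 * N
      · have he : Even (l₁.length + l₁.length * l₂.length) :=
          even_helper ⟨N, by omega⟩
        rw [smul_eq_mul, smul_eq_mul, ← mul_assoc, ← pow_add,
          show l₂.length * l₁.length = l₁.length * l₂.length from Nat.mul_comm _ _,
          Even.neg_one_pow he, one_mul]
      · rw [hμF (l₁ ++ l₂) (by rw [List.length_append]; omega)]
        simp
    intro a b
    induction mem_span_F a using Submodule.span_induction with
    | mem x hx =>
      obtain ⟨l₁, rfl⟩ := hx
      induction mem_span_F b using Submodule.span_induction with
      | mem y hy => obtain ⟨l₂, rfl⟩ := hy; exact hmon l₁ l₂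
      | zero => simp
      | add y z _ _ hy hz => rw [mul_add, add_mul, map_add, map_add, hy, hz]
      | smul c y _ hy => rw [mul_smul_comm, smul_mul_assoc, map_smul, map_smul, hy]
    | zero => simp
    | add x y _ _ hx hy => rw [add_mul, map_add, hx, hy, map_add, mul_add, map_add]
    | smul c x _ hx => rw [smul_mul_assoc, map_smul, hx, map_smul, mul_smul_comm, map_smul]
  -- nondegeneracy of μ against right multiplication
  have hμnd : ∀ a : Lam N, (∀ c : Lam N, μ (a * c) = 0) → a = 0 := by
    intro a ha
    obtain ⟨co, hco⟩ := (Submodule.mem_span_range_iff_exists_fun ℂ).mp (mem_span_eS a)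
    have hcoeff : ∀ s : Finset (Fin (2 * N)), co s = 0 := by
      intro s
      have hpair : ∀ t : Finset (Fin (2 * N)), t ≠ s → μ (eS N t * eS N sᶜ) = 0 := by
        intro t hts
        have hform : eS N t * eS N sᶜ =
            P N (t.sort (· ≤ ·) ++ sᶜ.sort (· ≤ ·)) := (P_append _ _).symm
        by_cases hsub : t ⊆ s
        · have hlt : t.card < s.card := Finset.card_lt_card (hsub.ssubset_of_ne hts)
          have hsle : s.card ≤ 2 * N := by
            simpa using Finset.card_le_card (Finset.subset_univ s)
          rw [hform, P]
          refine hμF _ ?_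
          simp only [List.length_map, List.length_append, Finset.length_sort,
            Finset.card_compl, Fintype.card_fin]
          omega
        · rw [hform, P_dup ?_, map_zero]
          intro hnd
          rw [List.nodup_append] at hnd
          obtain ⟨i, hit, his⟩ : ∃ i, i ∈ t ∧ i ∉ s := by
            by_contra hc
            push_neg at hc
            exact hsub hc
          exact hnd.2.2 i ((Finset.mem_sort _).mpr hit)
            i ((Finset.mem_sort _).mpr (Finset.mem_compl.mpr his)) rfl
      have hss : μ (eS N s * eS N sᶜ) ≠ 0 := by
        have hform : eS N s * eS N sᶜ =
            P N (s.sort (· ≤ ·) ++ sᶜ.sort (· ≤ ·)) := (P_append _ _).symm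
        have hnd : (s.sort (· ≤ ·) ++ sᶜ.sort (· ≤ ·)).Nodup := by
          rw [List.nodup_append]
          refine ⟨Finset.sort_nodup _ _, Finset.sort_nodup _ _, ?_⟩
          intro i hi i' hic hii
          subst hii
          rw [Finset.mem_sort] at hi hic
          exact (Finset.mem_compl.mp hic) hi
        have hperm : (s.sort (· ≤ ·) ++ sᶜ.sort (· ≤ ·)).Perm (List.finRange (2 * N)) := by
          refine List.perm_of_nodup_nodup_toFinset_eq hnd (List.nodup_finRange _) ?_
          rw [List.toFinset_finRange]
          ext i
          simp [Finset.mem_sort]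
        obtain ⟨c, hc, hP⟩ := F_perm (hperm.map (gen N))
        have hval : μ (eS N s * eS N sᶜ) = c := by
          rw [hform, P, hP, map_smul,
            show F N ((List.finRange (2 * N)).map (gen N)) = topEl N from
              (topEl_eq).symm, hμtop, smul_eq_mul, mul_one]
        rw [hval]
        rcases hc with rfl | rfl <;> norm_num
      have h0 : μ (a * eS N sᶜ) = 0 := ha _
      rw [← hco, Finset.sum_mul, map_sum] at h0
      rw [Finset.sum_eq_single s
        (fun t _ hts => by rw [smul_mul_assoc, map_smul, hpair t hts, smul_zero])
        (fun hs => absurd (Finset.mem_univ s) hs)] at h0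
      rw [smul_mul_assoc, map_smul, smul_eq_mul] at h0
      exact (mul_eq_zero.mp h0).resolve_right hss
    rw [← hco]
    simp [hcoeff]
  constructor
  · -- centrality
    intro x y
    obtain ⟨⟨a, b⟩, hab, -⟩ := hfree x
    obtain ⟨⟨c, d⟩, hcd, -⟩ := hfree y
    simp only at hab hcd
    rw [hab, hcd, hmulform, hmulform, εval, εval, map_add, map_add, hK a d, hK c b]
    ring
  · -- nondegeneracy
    intro x hx
    obtain ⟨⟨a, b⟩, hab, -⟩ := hfree x
    simp only at hab
    have hb : b = 0 := by
      have h1 : ∀ c : Lam N, μ (b * invol N c) = 0 := by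
        intro c
        have hc := hx (j c)
        rw [hab, add_mul, ← map_mul, mul_assoc, hcomm c, ← mul_assoc, ← map_mul,
          εval] at hc
        exact hc
      refine hμnd b fun c => ?_
      obtain ⟨c', rfl⟩ := invol_surjective c
      exact h1 c'
    have ha : a = 0 := by
      refine hμnd a fun c => ?_
      have hc := hx (j c * κ)
      rw [hab, hb, map_zero, zero_mul, add_zero, ← mul_assoc, ← map_mul, hε1] at hc
      exact hc
    rw [hab, ha, hb]
    simp
end

section
/- Let C be a braided finite tensor category with coend L, Hopf pairing ω : L ⊗ L → 1, and let Ω : C(1,L) → C(L,1) be defined by Ω(f) = ω ∘ (f ⊗ id_L). Then Ω is a homomorphism of k-algebras from the algebra of class functions (with product induced by the multiplication μ_L of L) to the algebra of central elements (with convolution product induced by the comultiplication Δ_L). -/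
open CategoryTheory MonoidalCategory

/-- for a braided finite tensor category `C` with coend Hopf algebra `L`
(multiplication `μ`, comultiplication `Δ`, unit `ηL`, counit `εL`) and Hopf pairing
`ω : L ⊗ L ⟶ 𝟙`, the map `Ω : C(1,L) → C(L,1)`, `f ↦ (f ⊗ id) ≫ ω`, is a homomorphism
of `k`-algebras from class functions (product induced by `μ`) to central elements
(convolution product induced by `Δ`). -/
theorem Omega_algebra_hom
    (k : Type) [Field k]
    (C : Type) [Category C] [Preadditive C] [Linear k C] [Abelian C]
    [MonoidalCategory C] [BraidedCategory C] [RightRigidCategory C]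
    (L : C) (μ : L ⊗ L ⟶ L) (Δ : L ⟶ L ⊗ L) (ηL : 𝟙_ C ⟶ L) (εL : L ⟶ 𝟙_ C)
    (ω : L ⊗ L ⟶ 𝟙_ C)
    -- `ω` is a Hopf pairing: it intertwines multiplication on one side with
    -- comultiplication on the other, and units with counits:
    (hω₁ : (μ ▷ L) ≫ ω =
      ((L ⊗ L) ◁ Δ) ≫ tensorμ L L L L ≫ (ω ⊗ₘ ω) ≫ (λ_ (𝟙_ C)).hom)
    (hω₂ : (L ◁ μ) ≫ ω =
      (Δ ▷ (L ⊗ L)) ≫ tensorμ L L L L ≫ (ω ⊗ₘ ω) ≫ (λ_ (𝟙_ C)).hom)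
    (hωη : (ηL ▷ L) ≫ ω = (λ_ L).hom ≫ εL)
    (hωη' : (L ◁ ηL) ≫ ω = (ρ_ L).hom ≫ εL)
    -- the convolution algebra `C(L,1)` is commutative:
    (hcomm : ∀ f g : L ⟶ 𝟙_ C,
      Δ ≫ (f ⊗ₘ g) ≫ (λ_ (𝟙_ C)).hom = Δ ≫ (g ⊗ₘ f) ≫ (λ_ (𝟙_ C)).hom) :
    -- `Ω` preserves products and units:
    (∀ a b : 𝟙_ C ⟶ L,
      ((λ_ L).inv ≫ ((((λ_ (𝟙_ C)).inv ≫ (a ⊗ₘ b) ≫ μ)) ▷ L) ≫ ω) =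
        Δ ≫ (((λ_ L).inv ≫ (a ▷ L) ≫ ω) ⊗ₘ ((λ_ L).inv ≫ (b ▷ L) ≫ ω)) ≫
          (λ_ (𝟙_ C)).hom) ∧
    ((λ_ L).inv ≫ (ηL ▷ L) ≫ ω = εL) := by
  constructor
  · intro a b
    calc (λ_ L).inv ≫ ((((λ_ (𝟙_ C)).inv ≫ (a ⊗ₘ b) ≫ μ)) ▷ L) ≫ ω
        = (λ_ L).inv ≫ (((λ_ (𝟙_ C)).inv ≫ (a ⊗ₘ b)) ▷ L) ≫ (μ ▷ L) ≫ ω := by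
          simp [MonoidalCategory.comp_whiskerRight]
      _ = (λ_ L).inv ≫ (((λ_ (𝟙_ C)).inv ≫ (a ⊗ₘ b)) ▷ L) ≫ ((L ⊗ L) ◁ Δ) ≫
            tensorμ L L L L ≫ (ω ⊗ₘ ω) ≫ (λ_ (𝟙_ C)).hom := by rw [hω₁]
      _ = (λ_ L).inv ≫ (𝟙_ C ◁ Δ) ≫ (((λ_ (𝟙_ C)).inv ≫ (a ⊗ₘ b)) ▷ (L ⊗ L)) ≫
            tensorμ L L L L ≫ (ω ⊗ₘ ω) ≫ (λ_ (𝟙_ C)).hom := by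
          rw [← whisker_exchange_assoc]
      _ = Δ ≫ (λ_ (L ⊗ L)).inv ≫ ((λ_ (𝟙_ C)).inv ▷ (L ⊗ L)) ≫ ((a ⊗ₘ b) ▷ (L ⊗ L)) ≫
            tensorμ L L L L ≫ (ω ⊗ₘ ω) ≫ (λ_ (𝟙_ C)).hom := by
          rw [leftUnitor_inv_naturality_assoc, MonoidalCategory.comp_whiskerRight]
          simp
      _ = Δ ≫ (λ_ (L ⊗ L)).inv ≫ ((λ_ (𝟙_ C)).inv ▷ (L ⊗ L)) ≫ tensorμ (𝟙_ C) (𝟙_ C) L L ≫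
            ((a ▷ L) ⊗ₘ (b ▷ L)) ≫ (ω ⊗ₘ ω) ≫ (λ_ (𝟙_ C)).hom := by
          rw [tensorμ_natural_left_assoc]
      _ = Δ ≫ ((λ_ L).inv ⊗ₘ (λ_ L).inv) ≫ ((a ▷ L) ⊗ₘ (b ▷ L)) ≫ (ω ⊗ₘ ω) ≫ (λ_ (𝟙_ C)).hom := by
          have h := tensor_left_unitality (C := C) L L
          have h2 : (λ_ (𝟙_ C)).inv ▷ (L ⊗ L) ≫ tensorμ (𝟙_ C) (𝟙_ C) L L
              = (λ_ (L ⊗ L)).hom ≫ ((λ_ L).inv ⊗ₘ (λ_ L).inv) := by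
            rw [h, Category.assoc, Category.assoc, tensorHom_comp_tensorHom, Iso.hom_inv_id, id_tensorHom_id, Category.comp_id]
          rw [reassoc_of% h2, Iso.inv_hom_id_assoc]
      _ = Δ ≫ (((λ_ L).inv ≫ (a ▷ L) ≫ ω) ⊗ₘ ((λ_ L).inv ≫ (b ▷ L) ≫ ω)) ≫ (λ_ (𝟙_ C)).hom := by
          conv_rhs => rw [← tensorHom_comp_tensorHom, ← tensorHom_comp_tensorHom]
          simp only [Category.assoc]
  · rw [hωη, Iso.inv_hom_id_assoc]
end
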